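/- A graph G = (V,E) admits a T-odd acyclic orientation for a given T ⊆ V if and only if the graph G' obtained from G by adding a new vertex v adjacent to all vertices of V \ T is dual-critical. -/

import Mathlib

variable {V : Type*}

/-- An orientation of a simple graph: a relation choosing a direction for each edge. -/
def IsOrientation (G : SimpleGraph V) (r : V → V → Prop) : Prop :=
  (∀ u v, G.Adj u v ↔ (r u v ∨ r v u)) ∧ ∀ u v, r u v → ¬ r v u

/-- A relation is acyclic if it has no directed cycle. -/
def AcyclicRel (r : V → V → Prop) : Prop := ∀ v, ¬ Relation.TransGen r v v

/-- Indegree of a vertex in an orientation. -/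
noncomputable def inDeg (r : V → V → Prop) (v : V) : ℕ := {u | r u v}.ncard

/-- Dual-critical: there is an acyclic orientation in which all vertices except one
have odd indegree. -/
def DualCritical (G : SimpleGraph V) : Prop :=
  ∃ r : V → V → Prop, IsOrientation G r ∧ AcyclicRel r ∧
    ∃ s : V, ∀ v : V, v ≠ s → Odd (inDeg r v)

/-- Dual-critical via a good ordering: an enumeration of all vertices such that every
vertex except the first has an odd number of neighbours among its predecessors. -/
def DualCriticalOrd (G : SimpleGraph V) : Prop :=
  ∃ (n : ℕ) (e : Fin n ≃ V), ∀ i : Fin n, 0 < i.val →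
    Odd ({j : Fin n | j < i ∧ G.Adj (e j) (e i)}.ncard)

/-- Number of edges between two (disjoint) vertex sets. -/
noncomputable def cut (G : SimpleGraph V) (A B : Set V) : ℕ :=
  {p : V × V | p.1 ∈ A ∧ p.2 ∈ B ∧ G.Adj p.1 p.2}.ncard

/-- A good `k`-partition: an ordered partition into nonempty classes such that each class
after the first is joined to the union of the previous ones by an odd number of edges. -/
def GoodPartition (G : SimpleGraph V) {k : ℕ} (P : Fin k → Set V) : Prop :=
  (∀ i, (P i).Nonempty) ∧ Pairwise (Function.onFun Disjoint P) ∧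
  (⋃ i, P i) = Set.univ ∧
  ∀ i : Fin k, 0 < i.val → Odd (cut G (⋃ j ∈ {j : Fin k | j < i}, P j) (P i))

def KDualCritical (G : SimpleGraph V) (k : ℕ) : Prop :=
  ∃ P : Fin k → Set V, GoodPartition G P

noncomputable def maxdc (G : SimpleGraph V) : ℕ := sSup {k | KDualCritical G k}

/-- A `T`-odd orientation: vertices in `T` have odd indegree, others even. -/
def TOdd (r : V → V → Prop) (T : Set V) : Prop :=
  ∀ v, (v ∈ T → Odd (inDeg r v)) ∧ (v ∉ T → Even (inDeg r v))

/-- Super-dual-critical: deleting any vertex leaves a dual-critical graph. -/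
def SuperDualCritical (G : SimpleGraph V) : Prop :=
  ∀ v : V, DualCriticalOrd (G.induce ({v}ᶜ : Set V))

/-- The graph obtained from `G` by adding a new vertex (`none`) adjacent to all
vertices of `S`. -/
def addVertex (G : SimpleGraph V) (S : Set V) : SimpleGraph (Option V) where
  Adj x y := match x, y with
    | some u, some v => G.Adj u v
    | some u, none => u ∈ S
    | none, some v => v ∈ S
    | none, none => False
  symm := by
    constructor
    intro x y h
    cases x <;> cases y <;> first | exact h | exact h.symm
  loopless := by
    constructor
    intro x h
    cases x with
    | none => exact h
    | some u => exact G.irrefl h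


open Classical

section TOLdef
variable {α : Type*}

/-- count of elements of `l` satisfying `p` -/
noncomputable def cnt (p : α → Prop) (l : List α) : ℕ :=
  List.countP (fun a => decide (p a)) l

@[simp] lemma cnt_nil (p : α → Prop) : cnt p ([] : List α) = 0 := rfl

lemma cnt_cons (p : α → Prop) (a : α) (l : List α) :
    cnt p (a :: l) = cnt p l + if p a then 1 else 0 := by
  simp [cnt, List.countP_cons]

lemma cnt_perm (p : α → Prop) {l l' : List α} (h : l.Perm l') : cnt p l = cnt p l' :=
  h.countP_eq _

lemma cnt_congr {p q : α → Prop} {l : List α} (h : ∀ a ∈ l, p a ↔ q a) :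
    cnt p l = cnt q l := by
  apply List.countP_congr
  intro x hx
  simpa using h x hx

/-- flip membership in `T` at neighbours of `v` -/
def flipT (A : α → α → Prop) (v : α) (T : Set α) : Set α := {u | Xor' (u ∈ T) (A v u)}

lemma mem_flipT {A : α → α → Prop} {v u : α} {T : Set α} :
    u ∈ flipT A v T ↔ Xor' (u ∈ T) (A v u) := Iff.rfl

/-- `T`-odd list: each element's number of `A`-neighbours among earlier elements is odd
iff the element lies in `T`. -/
def TOL (A : α → α → Prop) : Set α → List α → Prop
  | _, [] => True
  | T, v :: l => v ∉ T ∧ TOL A (flipT A v T) l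

@[simp] lemma TOL_nil (A : α → α → Prop) (T : Set α) : TOL A T [] := trivial

@[simp] lemma TOL_cons (A : α → α → Prop) (T : Set α) (v : α) (l : List α) :
    TOL A T (v :: l) ↔ v ∉ T ∧ TOL A (flipT A v T) l := Iff.rfl

lemma TOL_congr {A : α → α → Prop} {T T' : Set α} {l : List α}
    (h : ∀ u ∈ l, u ∈ T ↔ u ∈ T') : TOL A T l ↔ TOL A T' l := by
  induction l generalizing T T' with
  | nil => simp
  | cons v l ih =>
    simp only [TOL_cons]
    have hv : v ∈ T ↔ v ∈ T' := h v (by simp)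
    have : TOL A (flipT A v T) l ↔ TOL A (flipT A v T') l := by
      apply ih
      intro u hu
      simp only [mem_flipT, Xor']
      have := h u (by simp [hu])
      simp only [Xor]
      tauto
    tauto

private lemma xor_odd_iff (P Q : Prop) (n : ℕ) :
    (Xor' P Q ↔ Odd n) ↔ (P ↔ Odd (n + if Q then 1 else 0)) := by
  rw [Nat.odd_iff, Nat.odd_iff]
  by_cases hQ : Q <;> by_cases hP : P <;> simp [hQ, hP, Xor'] <;> omega

lemma TOL_append_singleton {A : α → α → Prop} {T : Set α} {l : List α} {x : α} :
    TOL A T (l ++ [x]) ↔ TOL A T l ∧ (x ∈ T ↔ Odd (cnt (fun u => A u x) l)) := by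
  induction l generalizing T with
  | nil =>
    simp [Nat.odd_iff]
  | cons v l ih =>
    simp only [List.cons_append, TOL_cons, ih, cnt_cons]
    have h := xor_odd_iff (x ∈ T) (A v x) (cnt (fun u => A u x) l)
    simp only [mem_flipT]
    rw [h]
    tauto

/-- parity of the complement-count after a flip -/
lemma cnt_notmem_flipT (A : α → α → Prop) (x : α) (T : Set α) (l : List α) :
    cnt (fun u => u ∉ flipT A x T) l % 2
      = (cnt (fun u => u ∉ T) l + cnt (fun u => A x u) l) % 2 := by
  induction l with
  | nil => simp
  | cons a l ih =>
    simp only [cnt_cons]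
    set c1 := cnt (fun u => u ∉ flipT A x T) l with hc1
    set c2 := cnt (fun u => u ∉ T) l with hc2
    set c3 := cnt (fun u => A x u) l with hc3
    by_cases h1 : a ∈ T <;> by_cases h2 : A x a <;>
      simp only [mem_flipT, Xor', h1, h2, not_true, not_false_iff, if_true, if_false] <;>
      simp [h1, h2] <;> omega

end TOLdef

section TOLmain
variable {α : Type*}

lemma cnt_append (p : α → Prop) (l₁ l₂ : List α) :
    cnt p (l₁ ++ l₂) = cnt p l₁ + cnt p l₂ := by
  simp [cnt, List.countP_append]

/-- characterization of `TOL` via decompositions -/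
lemma TOL_iff_parts {A : α → α → Prop} {T : Set α} {l : List α} :
    TOL A T l ↔ ∀ l₁ v l₂, l = l₁ ++ v :: l₂ → (v ∈ T ↔ Odd (cnt (fun u => A u v) l₁)) := by
  induction l generalizing T with
  | nil =>
    simp only [TOL_nil, true_iff]
    intro l₁ v l₂ h
    exact absurd h (by simp)
  | cons w l ih =>
    rw [TOL_cons, ih]
    constructor
    · rintro ⟨hw, hrest⟩ l₁ v l₂ hdec
      cases l₁ with
      | nil =>
        simp only [List.nil_append, List.cons.injEq] at hdec
        obtain ⟨rfl, rfl⟩ := hdec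
        simpa [Nat.odd_iff] using hw
      | cons a l₁' =>
        simp only [List.cons_append, List.cons.injEq] at hdec
        obtain ⟨rfl, hdec⟩ := hdec
        have h2 := hrest l₁' v l₂ hdec
        rw [mem_flipT] at h2
        rw [cnt_cons]
        exact (xor_odd_iff _ _ _).mp h2
    · intro h
      refine ⟨?_, ?_⟩
      · have := h [] w l rfl
        simpa [Nat.odd_iff] using this
      · intro l₁ v l₂ hdec
        have := h (w :: l₁) v l₂ (by simp [hdec])
        rw [cnt_cons] at this
        rw [mem_flipT]
        exact (xor_odd_iff _ _ _).mpr this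

/-- Main parity lemma: a "dual-critical" vertex list can be re-ordered to realize any
target parity set `T` whose complement has odd size. -/
lemma TOL_perm_exists (A : α → α → Prop) (hsym : ∀ u v, A u v → A v u) :
    ∀ (n : ℕ) (l : List α), l.length ≤ n → l.Nodup →
    (∃ v t, (v :: t).Perm l ∧ TOL A ({v}ᶜ : Set α) (v :: t)) →
    ∀ T : Set α, Odd (cnt (fun u => u ∉ T) l) →
    ∃ l', l'.Perm l ∧ TOL A T l' := by
  intro n
  induction n with
  | zero =>
    rintro l hl _ - T hodd
    rw [Nat.le_zero, List.length_eq_zero_iff] at hl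
    subst hl
    simp [Nat.odd_iff] at hodd
  | succ n ihn =>
    rintro l hlen hnd ⟨v, t, hperm, hTOL⟩ T hodd
    rcases List.eq_nil_or_concat t with rfl | ⟨t', x, rfl⟩
    · -- single vertex
      have hc : cnt (fun u => u ∉ T) l = cnt (fun u => u ∉ T) [v] :=
        cnt_perm _ hperm.symm
      have hvT : v ∉ T := by
        by_contra h
        rw [hc] at hodd
        simp [cnt_cons, h, Nat.odd_iff] at hodd
      exact ⟨[v], hperm, by simp [TOL_cons, hvT]⟩
    · rw [List.concat_eq_append] at hperm hTOL
      have hsplit : TOL A ({v}ᶜ : Set α) ((v :: t') ++ [x]) := by simpa using hTOL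
      rw [TOL_append_singleton] at hsplit
      obtain ⟨hgood', hxdeg⟩ := hsplit
      have hnd' : (v :: (t' ++ [x])).Nodup := hperm.symm.nodup hnd
      have hnd2 : ((v :: t') ++ [x]).Nodup := by simpa using hnd'
      have hxv : x ∉ v :: t' := by
        intro hmem
        rcases List.nodup_append'.mp hnd2 with ⟨-, -, hdisj⟩
        exact hdisj hmem (by simp)
      have hxvne : x ≠ v := fun h => hxv (h ▸ by simp)
      have hD : Odd (cnt (fun u => A u x) (v :: t')) := hxdeg.mp (by simp [hxvne])
      have hlen2 : (v :: t').length ≤ n := by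
        have := hperm.length_eq
        simp at this hlen ⊢
        omega
      have hnd3 : (v :: t').Nodup := (List.nodup_append.mp hnd2).1
      have hgoodEx : ∃ w s, (w :: s).Perm (v :: t') ∧ TOL A ({w}ᶜ : Set α) (w :: s) :=
        ⟨v, t', List.Perm.refl _, hgood'⟩
      have hcntl : cnt (fun u => u ∉ T) l
          = cnt (fun u => u ∉ T) (v :: t') + (if x ∉ T then 1 else 0) := by
        rw [cnt_perm _ hperm.symm]
        show cnt _ ((v :: t') ++ [x]) = _
        rw [cnt_append]
        congr 1
        simp [cnt_cons]
      by_cases hxT : x ∈ T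
      · have hodd2 : Odd (cnt (fun u => u ∉ T) (v :: t')) := by
          rw [hcntl] at hodd
          simpa [hxT] using hodd
        obtain ⟨l'', hp'', hTOL''⟩ := ihn (v :: t') hlen2 hnd3 hgoodEx T hodd2
        refine ⟨l'' ++ [x], ?_, ?_⟩
        · exact (hp''.append_right [x]).trans hperm
        · rw [TOL_append_singleton]
          refine ⟨hTOL'', ?_⟩
          rw [cnt_perm _ hp'']
          exact ⟨fun _ => hD, fun _ => hxT⟩
      · have hodd2 : Odd (cnt (fun u => u ∉ flipT A x T) (v :: t')) := by
          rw [Nat.odd_iff, cnt_notmem_flipT]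
          have h1 : cnt (fun u => A x u) (v :: t') = cnt (fun u => A u x) (v :: t') :=
            cnt_congr (fun a _ => ⟨hsym _ _, hsym _ _⟩)
          rw [Nat.odd_iff] at hodd hD
          rw [hcntl] at hodd
          simp only [hxT, not_false_iff, if_true] at hodd
          omega
        obtain ⟨l'', hp'', hTOL''⟩ := ihn (v :: t') hlen2 hnd3 hgoodEx (flipT A x T) hodd2
        refine ⟨x :: l'', ?_, ?_⟩
        · exact ((hp''.cons x).trans (List.perm_append_singleton x (v :: t')).symm).trans hperm
        · exact ⟨hxT, hTOL''⟩

/-- Any vertex of a "dual-critical" list can be moved to the front. -/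
lemma TOL_good_start (A : α → α → Prop) (hsym : ∀ u v, A u v → A v u) :
    ∀ (n : ℕ) (l : List α), l.length ≤ n → l.Nodup →
    (∃ v t, (v :: t).Perm l ∧ TOL A ({v}ᶜ : Set α) (v :: t)) →
    ∀ w ∈ l, ∃ s, (w :: s).Perm l ∧ TOL A ({w}ᶜ : Set α) (w :: s) := by
  intro n
  induction n with
  | zero =>
    rintro l hl _ - w hw
    simp at hl
    subst hl
    simp at hw
  | succ n ihn =>
    rintro l hlen hnd ⟨v, t, hperm, hTOL⟩ w hw
    rcases List.eq_nil_or_concat t with rfl | ⟨t', x, rfl⟩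
    · have : w = v := by
        have := hperm.symm.mem_iff.mp hw
        simpa using this
      subst this
      exact ⟨[], hperm, hTOL⟩
    · rw [List.concat_eq_append] at hperm hTOL
      have hsplit : TOL A ({v}ᶜ : Set α) ((v :: t') ++ [x]) := by simpa using hTOL
      rw [TOL_append_singleton] at hsplit
      obtain ⟨hgood', hxdeg⟩ := hsplit
      have hnd' : (v :: (t' ++ [x])).Nodup := hperm.symm.nodup hnd
      have hnd2 : ((v :: t') ++ [x]).Nodup := by simpa using hnd'
      have hxv : x ∉ v :: t' := by
        intro hmem
        rcases List.nodup_append'.mp hnd2 with ⟨-, -, hdisj⟩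
        exact hdisj hmem (by simp)
      have hxvne : x ≠ v := fun h => hxv (h ▸ by simp)
      have hD : Odd (cnt (fun u => A u x) (v :: t')) := hxdeg.mp (by simp [hxvne])
      have hlen2 : (v :: t').length ≤ n := by
        have := hperm.length_eq
        simp at this hlen ⊢
        omega
      have hnd3 : (v :: t').Nodup := (List.nodup_append.mp hnd2).1
      have hgoodEx : ∃ w s, (w :: s).Perm (v :: t') ∧ TOL A ({w}ᶜ : Set α) (w :: s) :=
        ⟨v, t', List.Perm.refl _, hgood'⟩
      by_cases hwx : w = x
      · subst hwx
        have hodd2 : Odd (cnt (fun u => u ∉ {u : α | ¬ A w u}) (v :: t')) := by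
          have h1 : cnt (fun u => u ∉ {u : α | ¬ A w u}) (v :: t')
              = cnt (fun u => A u w) (v :: t') := by
            apply cnt_congr
            intro a _
            simp only [Set.mem_setOf_eq, not_not]
            exact ⟨hsym _ _, hsym _ _⟩
          rw [h1]
          exact hD
        obtain ⟨l'', hp'', hTOL''⟩ := TOL_perm_exists A hsym n (v :: t') hlen2 hnd3
          hgoodEx {u : α | ¬ A w u} hodd2
        refine ⟨l'', ?_, ?_⟩
        · exact ((hp''.cons w).trans (List.perm_append_singleton w (v :: t')).symm).trans hperm
        · rw [TOL_cons]
          refine ⟨by simp, ?_⟩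
          rw [TOL_congr (T' := {u : α | ¬ A w u})]
          · exact hTOL''
          · intro u hu
            have huv : u ∈ v :: t' := hp''.mem_iff.mp hu
            have hune : u ≠ w := fun h => hxv (h ▸ huv)
            simp [mem_flipT, Xor', hune]
      · have hwmem : w ∈ v :: t' := by
          have := hperm.symm.mem_iff.mp hw
          simp only [List.mem_cons, List.mem_append, List.mem_singleton] at this ⊢
          tauto
        obtain ⟨s, hps, hTOLs⟩ := ihn (v :: t') hlen2 hnd3 hgoodEx w hwmem
        refine ⟨s ++ [x], ?_, ?_⟩
        · have : (w :: s) ++ [x] = w :: (s ++ [x]) := by simp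
          rw [← this]
          exact (hps.append_right [x]).trans hperm
        · have : w :: (s ++ [x]) = (w :: s) ++ [x] := by simp
          rw [this, TOL_append_singleton]
          refine ⟨hTOLs, ?_⟩
          rw [cnt_perm _ hps]
          exact ⟨fun _ => hD, fun _ => by simp [Ne.symm hwx]⟩

end TOLmain

section conv
variable {α : Type*}

lemma mem_take_iff_indexOf {l : List α} {u : α} {n : ℕ} :
    u ∈ l.take n ↔ u ∈ l ∧ l.idxOf u < n := by
  induction l generalizing n with
  | nil => simp
  | cons a l ih =>
    cases n with
    | zero => simp
    | succ n =>
      simp only [List.take_succ_cons, List.mem_cons]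
      by_cases h : u = a
      · subst h
        simp [List.idxOf_cons_self]
      · rw [List.idxOf_cons_ne _ (fun e => h e.symm)]
        simp only [List.mem_cons, h, false_or, ih, Nat.succ_eq_add_one]
        constructor
        · rintro ⟨h1, h2⟩
          exact ⟨h1, by omega⟩
        · rintro ⟨h1, h2⟩
          exact ⟨h1, by omega⟩

lemma cnt_eq_ncard (p : α → Prop) (l : List α) (hnd : l.Nodup) :
    {u | u ∈ l ∧ p u}.ncard = cnt p l := by
  classical
  have h1 : {u | u ∈ l ∧ p u} = ↑((l.filter (fun a => decide (p a))).toFinset) := by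
    ext u
    simp [List.mem_filter]
  rw [h1, Set.ncard_coe_finset, List.toFinset_card_of_nodup (hnd.filter _)]
  rw [cnt, List.countP_eq_length_filter]

end conv

section convmain
variable {α : Type*}

lemma exists_topo_list [Fintype α] {r : α → α → Prop} (hr : AcyclicRel r) :
    ∃ l : List α, l.Nodup ∧ (∀ v, v ∈ l) ∧ List.Pairwise (fun a b => ¬ r b a) l := by
  classical
  have htr : IsTrans α (Relation.TransGen r) := ⟨fun _ _ _ => Relation.TransGen.trans⟩
  have hir : IsIrrefl α (Relation.TransGen r) := ⟨hr⟩
  have hwf : WellFounded (Relation.TransGen r) := Finite.wellFounded_of_trans_of_irrefl _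
  have hwfr : WellFounded r := Subrelation.wf (fun h => Relation.TransGen.single h) hwf
  have aux : ∀ (n : ℕ) (s : Finset α), s.card ≤ n →
      ∃ l : List α, l.Nodup ∧ (∀ v, v ∈ l ↔ v ∈ s) ∧
        List.Pairwise (fun a b => ¬ r b a) l := by
    intro n
    induction n with
    | zero =>
      intro s hs
      have : s = ∅ := Finset.card_eq_zero.mp (Nat.le_zero.mp hs)
      subst this
      exact ⟨[], by simp, by simp, by simp⟩
    | succ n ih =>
      intro s hs
      rcases s.eq_empty_or_nonempty with rfl | hne
      · exact ⟨[], by simp, by simp, by simp⟩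
      · obtain ⟨m, hm, hmin⟩ := hwfr.has_min ↑s (by exact_mod_cast hne)
        obtain ⟨l, hnd, hmem, hpw⟩ := ih (s.erase m)
          (by rw [Finset.card_erase_of_mem hm]; omega)
        refine ⟨m :: l, ?_, ?_, ?_⟩
        · rw [List.nodup_cons]
          exact ⟨fun h => by simpa using (hmem m).mp h, hnd⟩
        · intro v
          simp only [List.mem_cons, hmem, Finset.mem_erase]
          constructor
          · rintro (rfl | ⟨-, h⟩)
            · exact hm
            · exact h
          · intro h
            by_cases hv : v = m
            · exact Or.inl hv
            · exact Or.inr ⟨hv, h⟩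
        · rw [List.pairwise_cons]
          refine ⟨?_, hpw⟩
          intro b hb
          have : b ∈ s := (Finset.mem_erase.mp ((hmem b).mp hb)).2
          exact hmin b this
  obtain ⟨l, hnd, hmem, hpw⟩ := aux (Finset.univ.card) Finset.univ le_rfl
  exact ⟨l, hnd, fun v => (hmem v).mpr (Finset.mem_univ v), hpw⟩

/-- The central translation: `T`-parity acyclic orientations correspond to `TOL` lists. -/
lemma orientation_iff_TOL [Fintype α] (G : SimpleGraph α) (T : Set α) :
    (∃ r, IsOrientation G r ∧ AcyclicRel r ∧ ∀ v, (v ∈ T ↔ Odd (inDeg r v)))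
      ↔ ∃ l : List α, l.Nodup ∧ (∀ v, v ∈ l) ∧ TOL G.Adj T l := by
  classical
  constructor
  · rintro ⟨r, ⟨hadj, hasym⟩, hacyc, hT⟩
    obtain ⟨l, hnd, hcov, hpw⟩ := exists_topo_list hacyc
    refine ⟨l, hnd, hcov, ?_⟩
    rw [TOL_iff_parts]
    intro l₁ v l₂ hdec
    rw [hT v]
    have hkey : {u | r u v} = {u | u ∈ l₁ ∧ G.Adj u v} := by
      ext u
      simp only [Set.mem_setOf_eq]
      constructor
      · intro hru
        have hAdj : G.Adj u v := (hadj u v).mpr (Or.inl hru)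
        have hu : u ∈ l := hcov u
        rw [hdec] at hu hpw
        rcases List.mem_append.mp hu with h1 | h2
        · exact ⟨h1, hAdj⟩
        · rcases List.mem_cons.mp h2 with rfl | h3
          · exact absurd hAdj (G.loopless.irrefl u)
          · rcases List.pairwise_append.mp hpw with ⟨-, hp2, -⟩
            have := (List.pairwise_cons.mp hp2).1 u h3
            exact absurd hru this
      · rintro ⟨hul₁, hAdj⟩
        rcases (hadj u v).mp hAdj with h | h
        · exact h
        · exfalso
          rw [hdec] at hpw
          rcases List.pairwise_append.mp hpw with ⟨-, -, hcross⟩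
          exact hcross u hul₁ v (by simp) h
    have hnd₁ : l₁.Nodup := by
      rw [hdec] at hnd
      exact (List.nodup_append.mp hnd).1
    rw [inDeg, hkey, cnt_eq_ncard _ _ hnd₁]
  · rintro ⟨l, hnd, hcov, hTOL⟩
    refine ⟨fun a b => G.Adj a b ∧ l.idxOf a < l.idxOf b, ⟨?_, ?_⟩, ?_, ?_⟩
    · intro u v
      constructor
      · intro h
        have hne : l.idxOf u ≠ l.idxOf v :=
          fun e => h.ne ((List.idxOf_inj (hcov u)).mp e)
        rcases lt_or_gt_of_ne hne with hlt | hgt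
        · exact Or.inl ⟨h, hlt⟩
        · exact Or.inr ⟨h.symm, hgt⟩
      · rintro (⟨h, -⟩ | ⟨h, -⟩)
        · exact h
        · exact h.symm
    · rintro u v ⟨-, h1⟩ ⟨-, h2⟩
      omega
    · intro v hcyc
      have key : ∀ a b, Relation.TransGen (fun a b => G.Adj a b ∧ l.idxOf a < l.idxOf b) a b →
          l.idxOf a < l.idxOf b := by
        intro a b h
        induction h with
        | single h => exact h.2
        | tail _ h ih => exact ih.trans h.2
      exact absurd (key v v hcyc) (lt_irrefl _)
    · intro v
      have hvl : v ∈ l := hcov v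
      have hlt : l.idxOf v < l.length := List.idxOf_lt_length_iff.mpr hvl
      have hdec : l = l.take (l.idxOf v) ++ v :: l.drop (l.idxOf v + 1) := by
        conv_lhs => rw [← List.take_append_drop (l.idxOf v) l]
        rw [List.drop_eq_getElem_cons hlt, List.getElem_idxOf hlt]
      rw [TOL_iff_parts.mp hTOL _ _ _ hdec]
      have hkey : {u | G.Adj u v ∧ l.idxOf u < l.idxOf v}
          = {u | u ∈ l.take (l.idxOf v) ∧ G.Adj u v} := by
        ext u
        simp only [Set.mem_setOf_eq, mem_take_iff_indexOf]
        constructor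
        · rintro ⟨h1, h2⟩
          exact ⟨⟨hcov u, h2⟩, h1⟩
        · rintro ⟨⟨-, h2⟩, h1⟩
          exact ⟨h1, h2⟩
      have hndt : (l.take (l.idxOf v)).Nodup := (List.take_sublist _ _).nodup hnd
      rw [inDeg, hkey, cnt_eq_ncard _ _ hndt]

end convmain

section assembly
variable {W : Type*}

lemma TOL_map_some (G : SimpleGraph W) (S : Set W) (T' : Set (Option W)) (l : List W) :
    TOL (addVertex G S).Adj T' (l.map some) ↔ TOL G.Adj {v | some v ∈ T'} l := by
  induction l generalizing T' with
  | nil => simp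
  | cons v l ih =>
    simp only [List.map_cons, TOL_cons, ih]
    have hhead : (some v ∉ T') ↔ v ∉ {v | some v ∈ T'} := Iff.rfl
    have hset : {u | some u ∈ flipT (addVertex G S).Adj (some v) T'}
        = flipT G.Adj v {u | some u ∈ T'} := rfl
    rw [hset, hhead]

lemma all_some (t : List (Option W)) (h : ∀ x ∈ t, x ≠ none) :
    ∃ l : List W, t = l.map some := by
  induction t with
  | nil => exact ⟨[], rfl⟩
  | cons x t ih =>
    obtain ⟨l, rfl⟩ := ih (fun y hy => h y (List.mem_cons_of_mem _ hy))
    cases x with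
    | none => exact absurd rfl (h none (by simp))
    | some a => exact ⟨a :: l, rfl⟩

lemma flip_none_set (G : SimpleGraph W) (T : Set W) :
    {v | some v ∈ flipT (addVertex G Tᶜ).Adj none ({none}ᶜ : Set (Option W))} = T := by
  ext v
  have hadj : (addVertex G Tᶜ).Adj none (some v) ↔ v ∈ Tᶜ := Iff.rfl
  simp only [Set.mem_setOf_eq, mem_flipT, hadj, Xor']
  simp [Set.mem_compl_iff]

end assembly

theorem stmt11 [Fintype V] (G : SimpleGraph V) (T : Set V) :
    (∃ r : V → V → Prop, IsOrientation G r ∧ AcyclicRel r ∧ TOdd r T) ↔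
      DualCritical (addVertex G Tᶜ) := by
  classical
  constructor
  · rintro ⟨r, hor, hac, hT⟩
    have hT' : ∀ v, v ∈ T ↔ Odd (inDeg r v) := by
      intro v
      rcases hT v with ⟨h1, h2⟩
      constructor
      · exact h1
      · intro h
        by_contra hv
        exact (Nat.not_odd_iff_even.mpr (h2 hv)) h
    obtain ⟨l, hnd, hcov, hTOL⟩ := (orientation_iff_TOL G T).mp ⟨r, hor, hac, hT'⟩
    have hTOL' : TOL (addVertex G Tᶜ).Adj ({none}ᶜ : Set (Option V)) (none :: l.map some) := by
      rw [TOL_cons]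
      refine ⟨by simp, ?_⟩
      rw [TOL_map_some, flip_none_set]
      exact hTOL
    have hcov' : ∀ x : Option V, x ∈ none :: l.map some := by
      intro x
      cases x with
      | none => simp
      | some a => simp [hcov a]
    have hnd' : (none :: l.map some).Nodup := by
      rw [List.nodup_cons]
      exact ⟨by simp, hnd.map (Option.some_injective V)⟩
    obtain ⟨r', hor', hac', hparity⟩ :=
      (orientation_iff_TOL (addVertex G Tᶜ) ({none}ᶜ : Set (Option V))).mpr
        ⟨_, hnd', hcov', hTOL'⟩
    exact ⟨r', hor', hac', none, fun v hv => (hparity v).mp hv⟩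
  · rintro ⟨r', hor', hac', s, hodd⟩
    obtain ⟨L, hnd, hcov, hTOL⟩ :=
      (orientation_iff_TOL (addVertex G Tᶜ) {v | Odd (inDeg r' v)}).mp
        ⟨r', hor', hac', fun _ => Iff.rfl⟩
    cases L with
    | nil => exact absurd (hcov none) (by simp)
    | cons v₀ t₀ =>
      have hv₀ : v₀ ∉ {v : Option V | Odd (inDeg r' v)} := ((TOL_cons _ _ _ _).mp hTOL).1
      have hvs : v₀ = s := by
        by_contra h
        exact hv₀ (hodd v₀ h)
      have hTset : ∀ u : Option V, u ∈ {v : Option V | Odd (inDeg r' v)}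
          ↔ u ∈ ({v₀}ᶜ : Set (Option V)) := by
        intro u
        by_cases hu : u = v₀
        · subst hu
          exact iff_of_false hv₀ (by simp)
        · simp only [Set.mem_compl_iff, Set.mem_singleton_iff, hu, not_false_iff, iff_true]
          exact hodd u (hvs ▸ hu)
      have hTOL₀ : TOL (addVertex G Tᶜ).Adj ({v₀}ᶜ : Set (Option V)) (v₀ :: t₀) :=
        (TOL_congr (fun u _ => hTset u)).mp hTOL
      obtain ⟨t, hperm, hTOLn⟩ := TOL_good_start (addVertex G Tᶜ).Adj
        (fun u v h => h.symm) (v₀ :: t₀).length (v₀ :: t₀) le_rfl hnd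
        ⟨v₀, t₀, List.Perm.refl _, hTOL₀⟩ none (hcov none)
      have hndt : (none :: t).Nodup := hperm.symm.nodup hnd
      have htnone : ∀ x ∈ t, x ≠ none := by
        intro x hx hxn
        subst hxn
        exact (List.nodup_cons.mp hndt).1 hx
      obtain ⟨l, rfl⟩ := all_some t htnone
      obtain ⟨-, h2⟩ := (TOL_cons _ _ _ _).mp hTOLn
      rw [TOL_map_some, flip_none_set] at h2
      have hndl : l.Nodup := by
        have := (List.nodup_cons.mp hndt).2
        exact List.Nodup.of_map some this
      have hcovl : ∀ v, v ∈ l := by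
        intro v
        have h3 : some v ∈ none :: l.map some := hperm.mem_iff.mpr (hcov (some v))
        simpa using h3
      obtain ⟨r, hor, hac, hp⟩ := (orientation_iff_TOL G T).mpr ⟨l, hndl, hcovl, h2⟩
      refine ⟨r, hor, hac, ?_⟩
      intro v
      refine ⟨fun hv => (hp v).mp hv, fun hv => ?_⟩
      rw [← Nat.not_odd_iff_even]
      exact fun ho => hv ((hp v).mpr ho)
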